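/- Let E be a finite-dimensional real inner product space, A ⊆ E a finite set, B ⊆ E a bounded set, and ξ ∈ E with ⟪a, ξ⟫ ≥ 0 for all a ∈ A. Then there exists ε₀ > 0 such that for every ε with 0 < ε < ε₀, the set {u ∈ B : ⟪a, ξ − ε • u⟫ > 0 for all a ∈ A} is equal to the (ε-independent) set {u ∈ B : for every a ∈ A with ⟪a, ξ⟫ = 0 one has ⟪a, u⟫ < 0}. -/
import Mathlib


open RealInnerProductSpace

/-- Stabilization of the sets `U_{σ,ε} = {u ∈ B : ξ − ε • u ∈ Int σ}` for a polyhedral cone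
`σ = {x : ⟪a, x⟫ ≥ 0 for all a ∈ A}` containing `ξ`: for all sufficiently small `ε > 0`
the set equals the ε-independent set `{u ∈ B : ⟪a, u⟫ < 0 whenever ⟪a, ξ⟫ = 0}`. -/
theorem polyhedral_cone_mollifier_stabilization
    {E : Type*} [NormedAddCommGroup E] [InnerProductSpace ℝ E] [FiniteDimensional ℝ E]
    (A : Finset E) (B : Set E) (hB : Bornology.IsBounded B)
    (ξ : E) (hξ : ∀ a ∈ A, 0 ≤ ⟪a, ξ⟫) :
    ∃ ε₀ > (0 : ℝ), ∀ ε : ℝ, 0 < ε → ε < ε₀ →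
      {u ∈ B | ∀ a ∈ A, 0 < ⟪a, ξ - ε • u⟫} =
        {u ∈ B | ∀ a ∈ A, ⟪a, ξ⟫ = 0 → ⟪a, u⟫ < 0} := by
  obtain ⟨C, hC⟩ := hB.exists_norm_le
  set R : ℝ := max C 0 with hRdef
  have hR0 : 0 ≤ R := le_max_right _ _
  have hRb : ∀ u ∈ B, ‖u‖ ≤ R := fun u hu => (hC u hu).trans (le_max_left _ _)
  set S : Finset E := A.filter (fun a => 0 < ⟪a, ξ⟫) with hSdef
  set f : E → ℝ := fun a => ⟪a, ξ⟫ / (‖a‖ * R + 1) with hfdef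
  have hfpos : ∀ a ∈ S, 0 < f a := by
    intro a ha
    have h1 : 0 < ⟪a, ξ⟫ := (Finset.mem_filter.mp ha).2
    have h2 : 0 < ‖a‖ * R + 1 := by positivity
    exact div_pos h1 h2
  by_cases hS : S.Nonempty
  · refine ⟨S.inf' hS f, ?_, ?_⟩
    · obtain ⟨a, ha, hfa⟩ := Finset.exists_mem_eq_inf' hS f
      rw [hfa]; exact hfpos a ha
    · intro ε hε hεlt
      ext u
      simp only [Set.mem_setOf_eq]
      constructor
      · rintro ⟨hu, h⟩
        refine ⟨hu, fun a ha h0 => ?_⟩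
        have := h a ha
        rw [inner_sub_right, real_inner_smul_right, h0] at this
        nlinarith
      · rintro ⟨hu, h⟩
        refine ⟨hu, fun a ha => ?_⟩
        rw [inner_sub_right, real_inner_smul_right]
        rcases eq_or_lt_of_le (hξ a ha) with h0 | h0
        · have := h a ha h0.symm
          nlinarith
        · have haS : a ∈ S := Finset.mem_filter.mpr ⟨ha, h0⟩
          have hεf : ε < f a := lt_of_lt_of_le hεlt (Finset.inf'_le f haS)
          have hden : 0 < ‖a‖ * R + 1 := by positivity
          have h1 : ε * (‖a‖ * R + 1) < ⟪a, ξ⟫ := by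
            rw [hfdef] at hεf
            exact (lt_div_iff₀ hden).mp hεf
          have h2 : ⟪a, u⟫ ≤ ‖a‖ * ‖u‖ := real_inner_le_norm a u
          have h3 : ‖a‖ * ‖u‖ ≤ ‖a‖ * R :=
            mul_le_mul_of_nonneg_left (hRb u hu) (norm_nonneg a)
          nlinarith
  · refine ⟨1, one_pos, fun ε hε hεlt => ?_⟩
    ext u
    simp only [Set.mem_setOf_eq]
    have hA : ∀ a ∈ A, ⟪a, ξ⟫ = 0 := by
      intro a ha
      by_contra hne
      exact hS ⟨a, Finset.mem_filter.mpr ⟨ha, lt_of_le_of_ne (hξ a ha) (Ne.symm hne)⟩⟩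
    constructor
    · rintro ⟨hu, h⟩
      refine ⟨hu, fun a ha h0 => ?_⟩
      have := h a ha
      rw [inner_sub_right, real_inner_smul_right, h0] at this
      nlinarith
    · rintro ⟨hu, h⟩
      refine ⟨hu, fun a ha => ?_⟩
      rw [inner_sub_right, real_inner_smul_right, hA a ha]
      nlinarith [h a ha (hA a ha)]
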